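/- Every infinite ordinal γ (with the order topology) has Čech–Stone compactification β(γ) homeomorphic to the topological disjoint union of a compact ordinal space and the Čech–Stone compactification of a power ω^α of ω; concretely, if γ is compact then β(γ) ≅ γ ⊕ β(ω⁰), and if γ is not compact with Cantor normal form γ = ω^{α_k}·n_k + ⋯ + ω^{α_1}·n_1 then β(γ) ≅ (γ' + 1) ⊕ β(ω^{α_1}) where γ = (γ' + 1) + ω^{α_1}. -/

import Mathlib

open Ordinal Set Topology

noncomputable section StoneCechAux

variable {X Y : Type*} [TopologicalSpace X] [TopologicalSpace Y]

lemma stoneCechExtend_unit {Z : Type*} [TopologicalSpace Z] [T2Space Z] [CompactSpace Z]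
    {g : X → Z} (hg : Continuous g) (x : X) : stoneCechExtend hg (stoneCechUnit x) = g x :=
  congrFun (stoneCechExtend_extends hg) x

/-- Stone–Čech of a compact Hausdorff space is itself. -/
def stoneCechOfCompact [CompactSpace X] [T2Space X] : StoneCech X ≃ₜ X where
  toFun := stoneCechExtend (continuous_id : Continuous (id : X → X))
  invFun := stoneCechUnit
  left_inv := by
    have h : (stoneCechUnit ∘ stoneCechExtend (continuous_id : Continuous (id : X → X)) :
        StoneCech X → StoneCech X) = id := by
      apply stoneCech_hom_ext (continuous_stoneCechUnit.comp
        (continuous_stoneCechExtend continuous_id)) continuous_id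
      funext x
      simp [stoneCechExtend_unit]
    exact fun z => congrFun h z
  right_inv := fun x => stoneCechExtend_unit _ x
  continuous_toFun := continuous_stoneCechExtend _
  continuous_invFun := continuous_stoneCechUnit

/-- Stone–Čech respects homeomorphisms. -/
def stoneCechCongr (e : X ≃ₜ Y) : StoneCech X ≃ₜ StoneCech Y where
  toFun := stoneCechExtend (continuous_stoneCechUnit.comp e.continuous)
  invFun := stoneCechExtend (continuous_stoneCechUnit.comp e.symm.continuous)
  left_inv := by
    have h : (stoneCechExtend (continuous_stoneCechUnit.comp e.symm.continuous) ∘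
        stoneCechExtend (continuous_stoneCechUnit.comp e.continuous)) = id := by
      apply stoneCech_hom_ext ((continuous_stoneCechExtend _).comp
        (continuous_stoneCechExtend _)) continuous_id
      funext x
      simp [stoneCechExtend_unit]
    exact fun z => congrFun h z
  right_inv := by
    have h : (stoneCechExtend (continuous_stoneCechUnit.comp e.continuous) ∘
        stoneCechExtend (continuous_stoneCechUnit.comp e.symm.continuous)) = id := by
      apply stoneCech_hom_ext ((continuous_stoneCechExtend _).comp
        (continuous_stoneCechExtend _)) continuous_id
      funext y
      simp [stoneCechExtend_unit]
    exact fun z => congrFun h z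
  continuous_toFun := continuous_stoneCechExtend _
  continuous_invFun := continuous_stoneCechExtend _

/-- Stone–Čech of a disjoint union. -/
def stoneCechSum : StoneCech (X ⊕ Y) ≃ₜ StoneCech X ⊕ StoneCech Y where
  toFun := stoneCechExtend (Continuous.sumMap (continuous_stoneCechUnit (α := X)) (continuous_stoneCechUnit (α := Y)))
  invFun := Sum.elim
    (stoneCechExtend (continuous_stoneCechUnit.comp continuous_inl))
    (stoneCechExtend (continuous_stoneCechUnit.comp continuous_inr))
  left_inv := by
    have h : (Sum.elim
        (stoneCechExtend (continuous_stoneCechUnit.comp continuous_inl))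
        (stoneCechExtend (continuous_stoneCechUnit.comp continuous_inr)) ∘
        stoneCechExtend (Continuous.sumMap (continuous_stoneCechUnit (α := X)) (continuous_stoneCechUnit (α := Y)))) =
        id := by
      apply stoneCech_hom_ext (Continuous.comp (Continuous.sumElim
        (continuous_stoneCechExtend (continuous_stoneCechUnit.comp continuous_inl))
        (continuous_stoneCechExtend (continuous_stoneCechUnit.comp continuous_inr)))
        (continuous_stoneCechExtend _)) continuous_id
      funext z
      cases z with
      | inl x => simp [stoneCechExtend_unit]
      | inr y => simp [stoneCechExtend_unit]
    exact fun z => congrFun h z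
  right_inv := by
    rintro (z | z)
    · have h : (stoneCechExtend (Continuous.sumMap (continuous_stoneCechUnit (α := X))
          (continuous_stoneCechUnit (α := Y))) ∘
          stoneCechExtend (continuous_stoneCechUnit.comp continuous_inl)) = Sum.inl := by
        apply stoneCech_hom_ext ((continuous_stoneCechExtend _).comp
          (continuous_stoneCechExtend _)) continuous_inl
        funext x
        simp [stoneCechExtend_unit]
      exact congrFun h z
    · have h : (stoneCechExtend (Continuous.sumMap (continuous_stoneCechUnit (α := X))
          (continuous_stoneCechUnit (α := Y))) ∘
          stoneCechExtend (continuous_stoneCechUnit.comp continuous_inr)) = Sum.inr := by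
        apply stoneCech_hom_ext ((continuous_stoneCechExtend _).comp
          (continuous_stoneCechExtend _)) continuous_inr
        funext y
        simp [stoneCechExtend_unit]
      exact congrFun h z
  continuous_toFun := continuous_stoneCechExtend _
  continuous_invFun := Continuous.sumElim
    (continuous_stoneCechExtend (continuous_stoneCechUnit.comp continuous_inl))
    (continuous_stoneCechExtend (continuous_stoneCechUnit.comp continuous_inr))

end StoneCechAux

noncomputable section OrdinalDecomp

universe u

lemma iio_succ_eq_icc (c : Ordinal.{u}) : (Set.Iio (c + 1) : Set Ordinal) = Set.Icc 0 c := by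
  ext x
  simp [Order.lt_add_one_iff]

lemma compactSpace_iio_succ (c : Ordinal.{u}) :
    CompactSpace (Set.Iio (c + 1) : Set Ordinal) := by
  rw [iio_succ_eq_icc]
  exact isCompact_iff_compactSpace.mp isCompact_Icc

/-- Decomposition of an ordinal interval along a successor ordinal. -/
noncomputable def iioAddHomeo (c b : Ordinal.{u}) :
    ((Set.Iio (c + 1) : Set Ordinal) ⊕ (Set.Iio b : Set Ordinal)) ≃ₜ
      (Set.Iio (c + 1 + b) : Set Ordinal) := by
  set a := c + 1 with ha
  let f1 : ↥(Set.Iio (α := Ordinal) a) → ↥(Set.Iio (a + b)) :=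
    fun x => ⟨x.1, lt_of_lt_of_le x.2 (le_self_add (a := a) (b := b))⟩
  let f2 : ↥(Set.Iio (α := Ordinal) b) → ↥(Set.Iio (a + b)) :=
    fun y => ⟨a + y.1, (add_lt_add_iff_left a).2 y.2⟩
  have hbij : Function.Bijective (Sum.elim f1 f2) := by
    constructor
    · rintro (x | x) (y | y) h <;>
        simp only [Sum.elim_inl, Sum.elim_inr, f1, f2, Subtype.mk.injEq] at h
      · exact congrArg Sum.inl (Subtype.ext (Subtype.mk.inj h))
      · exact absurd (Subtype.mk.inj h ▸ x.2) (le_self_add (a := a) (b := y.1)).not_gt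
      · exact absurd (Subtype.mk.inj h ▸ y.2) (le_self_add (a := a) (b := x.1)).not_gt
      · exact congrArg Sum.inr (Subtype.ext (add_left_cancel (Subtype.mk.inj h)))
    · rintro ⟨x, hx⟩
      rcases lt_or_ge x a with h | h
      · exact ⟨Sum.inl ⟨x, h⟩, rfl⟩
      · refine ⟨Sum.inr ⟨x - a, ?_⟩, ?_⟩
        · show x - a < b
          rwa [← add_lt_add_iff_left a, Ordinal.add_sub_cancel_of_le h]
        · simp only [Sum.elim_inr, f2]
          exact Subtype.ext (Ordinal.add_sub_cancel_of_le h)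
  have hf1c : Continuous f1 := Continuous.subtype_mk continuous_subtype_val _
  have hadd : Continuous (fun x : Ordinal => a + x) :=
    (Order.isNormal_iff_strictMono_and_continuous.1 (Ordinal.isNormal_add_right a)).2
  have hf2c : Continuous f2 :=
    Continuous.subtype_mk (hadd.comp continuous_subtype_val) _
  have hsm : StrictMono (fun x : Ordinal => a + x) := fun u v h => (add_lt_add_iff_left a).2 h
  have haddemb : IsEmbedding (fun x : Ordinal => a + x) := by
    apply hsm.isEmbedding_of_ordConnected
    constructor
    rintro x ⟨u, rfl⟩ y ⟨v, rfl⟩ z hz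
    exact ⟨z - a, Ordinal.add_sub_cancel_of_le ((le_self_add (a := a) (b := u)).trans hz.1)⟩
  have hf1emb : IsEmbedding f1 :=
    IsEmbedding.of_comp hf1c continuous_subtype_val IsEmbedding.subtypeVal
  have hf2emb : IsEmbedding f2 := by
    apply IsEmbedding.of_comp hf2c continuous_subtype_val
    exact haddemb.comp IsEmbedding.subtypeVal
  have hr1 : Set.range f1 = Subtype.val ⁻¹' (Set.Iio a) := by
    ext z
    constructor
    · rintro ⟨x, rfl⟩; exact x.2
    · intro h; exact ⟨⟨z.1, h⟩, Subtype.ext rfl⟩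
  have hr2 : Set.range f2 = Subtype.val ⁻¹' (Set.Ioi c) := by
    ext z
    constructor
    · rintro ⟨y, rfl⟩
      exact lt_of_lt_of_le (lt_add_one c) (le_self_add (a := a) (b := y.1))
    · intro h
      have hc : c < z.1 := h
      have h' : a ≤ z.1 := Order.add_one_le_iff.mpr hc
      refine ⟨⟨z.1 - a, ?_⟩, ?_⟩
      · show z.1 - a < b
        have := z.2
        rw [← add_lt_add_iff_left a, Ordinal.add_sub_cancel_of_le h']
        exact this
      · exact Subtype.ext (Ordinal.add_sub_cancel_of_le h')
  have hopen : IsOpenMap (Sum.elim f1 f2) := by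
    refine isOpenMap_sum.2 ⟨?_, ?_⟩
    · exact (IsOpenEmbedding.mk hf1emb
        (hr1 ▸ IsOpen.preimage continuous_subtype_val isOpen_Iio)).isOpenMap
    · exact (IsOpenEmbedding.mk hf2emb
        (hr2 ▸ IsOpen.preimage continuous_subtype_val isOpen_Ioi)).isOpenMap
  exact Equiv.toHomeomorphOfContinuousOpen (Equiv.ofBijective _ hbij)
    (Continuous.sumElim hf1c hf2c) hopen

end OrdinalDecomp

/-- Any two pointed subsingleton spaces are homeomorphic. -/
def singletonHomeo {X : Type*} {Y : Type*} [TopologicalSpace X] [TopologicalSpace Y]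
    [Subsingleton X] [Subsingleton Y] (x : X) (y : Y) : X ≃ₜ Y where
  toFun := fun _ => y
  invFun := fun _ => x
  left_inv := fun _ => Subsingleton.elim _ _
  right_inv := fun _ => Subsingleton.elim _ _
  continuous_toFun := continuous_const
  continuous_invFun := continuous_const

instance subsingleton_iio_one : Subsingleton (Set.Iio (1 : Ordinal.{u}) : Set Ordinal) :=
  ⟨fun a b => Subtype.ext (by
    rw [Ordinal.lt_one_iff_zero.mp a.2, Ordinal.lt_one_iff_zero.mp b.2])⟩

/-- Cross-universe homeomorphism between the one-point ordinal spaces `Iio 1`. -/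
noncomputable def iioOneHomeo :
    (Set.Iio (1 : Ordinal.{0}) : Set Ordinal) ≃ₜ (Set.Iio (1 : Ordinal.{u}) : Set Ordinal) :=
  singletonHomeo ⟨0, Set.mem_Iio.mpr zero_lt_one⟩ ⟨0, Set.mem_Iio.mpr zero_lt_one⟩

lemma stmt_10_part1 (γ : Ordinal.{0}) (hγ : Ordinal.omega0 ≤ γ)
    (hc : CompactSpace (Set.Iio γ)) (δ : Ordinal.{u}) (hδ : δ = 1) :
    Nonempty (StoneCech (Set.Iio γ) ≃ₜ ((Set.Iio γ) ⊕ StoneCech (Set.Iio δ))) := by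
  subst hδ
  have h1γ : (0 : Ordinal) + 1 + γ = γ := by
    rw [zero_add, Ordinal.one_add_of_omega0_le hγ]
  have e0 : (Set.Iio γ : Set Ordinal) ≃ₜ
      ((Set.Iio ((0 : Ordinal) + 1) : Set Ordinal) ⊕ (Set.Iio γ : Set Ordinal)) :=
    (Homeomorph.setCongr (congrArg Set.Iio h1γ.symm)).trans (iioAddHomeo 0 γ).symm
  haveI : CompactSpace (Set.Iio ((0 : Ordinal) + 1) : Set Ordinal) := compactSpace_iio_succ 0
  haveI : CompactSpace (Set.Iio ((1 : Ordinal.{u})) : Set Ordinal) := by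
    have := compactSpace_iio_succ (0 : Ordinal.{u})
    rwa [zero_add] at this
  have eA : StoneCech (Set.Iio γ : Set Ordinal) ≃ₜ (Set.Iio γ : Set Ordinal) :=
    stoneCechOfCompact
  have eB : ((Set.Iio ((0 : Ordinal) + 1) : Set Ordinal) ⊕ (Set.Iio γ : Set Ordinal)) ≃ₜ
      ((Set.Iio γ : Set Ordinal) ⊕ (Set.Iio ((0 : Ordinal) + 1) : Set Ordinal)) :=
    Homeomorph.sumComm _ _
  have eC : (Set.Iio ((0 : Ordinal.{0}) + 1) : Set Ordinal) ≃ₜ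
      (Set.Iio (1 : Ordinal.{u}) : Set Ordinal) := by
    have h01 : (Set.Iio ((0 : Ordinal.{0}) + 1) : Set Ordinal) = Set.Iio (1 : Ordinal.{0}) :=
      congrArg Set.Iio (zero_add 1)
    rw [h01]
    exact iioOneHomeo
  have eD : (Set.Iio (1 : Ordinal.{u}) : Set Ordinal) ≃ₜ
      StoneCech (Set.Iio (1 : Ordinal.{u}) : Set Ordinal) :=
    (stoneCechOfCompact (X := (Set.Iio (1 : Ordinal.{u}) : Set Ordinal))).symm
  exact ⟨eA.trans <| e0.trans <| eB.trans <|
    Homeomorph.sumCongr (Homeomorph.refl _) (eC.trans eD)⟩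

/-- The Čech–Stone compactification of an infinite ordinal space `γ` is homeomorphic to the
disjoint union of a compact ordinal and the Čech–Stone compactification of a power of `ω`. -/
theorem stmt_10 (γ : Ordinal.{0}) (hγ : Ordinal.omega0 ≤ γ) :
    (CompactSpace (Set.Iio γ) →
      Nonempty (StoneCech (Set.Iio γ) ≃ₜ
        ((Set.Iio γ) ⊕ StoneCech (Set.Iio (Ordinal.omega0 ^ (0 : Ordinal)))))) ∧
    (¬ CompactSpace (Set.Iio γ) →
      ∀ (k : ℕ) (α : Fin (k + 1) → Ordinal) (n : Fin (k + 1) → ℕ),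
        StrictMono α → (∀ i, 0 < n i) →
        γ = (List.ofFn fun i : Fin (k + 1) =>
              Ordinal.omega0 ^ α i * (n i : Ordinal)).reverse.sum →
        ∀ γ' : Ordinal, γ = (γ' + 1) + Ordinal.omega0 ^ α 0 →
          Nonempty (StoneCech (Set.Iio γ) ≃ₜ
            ((Set.Iio (γ' + 1)) ⊕ StoneCech (Set.Iio (Ordinal.omega0 ^ α 0))))) := by
  constructor
  · exact fun hc => stmt_10_part1 γ hγ hc _ (Ordinal.opow_zero _)
  · intro _ k α n _ _ _ γ' hγ'
    have e1 : (Set.Iio γ : Set Ordinal) ≃ₜ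
        ((Set.Iio (γ' + 1) : Set Ordinal) ⊕ (Set.Iio (Ordinal.omega0 ^ α 0) : Set Ordinal)) :=
      (Homeomorph.setCongr (congrArg Set.Iio hγ')).trans
        (iioAddHomeo γ' (Ordinal.omega0 ^ α 0)).symm
    haveI : CompactSpace (Set.Iio (γ' + 1) : Set Ordinal) := compactSpace_iio_succ γ'
    exact ⟨(stoneCechCongr e1).trans <| stoneCechSum.trans <|
      Homeomorph.sumCongr stoneCechOfCompact (Homeomorph.refl _)⟩
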